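/- There are no integers x, y with x + y = 1 such that (48x + 12y + 36)/21, (−24x − 6y + 24)/21, and (5x + 72)/21 are all non-negative integers. -/
import Mathlib

theorem stmt3 : ¬ ∃ x y : ℤ, x + y = 1 ∧ ((21:ℤ) ∣ (48*x + 12*y + 36) ∧ 0 ≤ (48*x + 12*y + 36)) ∧ ((21:ℤ) ∣ (-24*x - 6*y + 24) ∧ 0 ≤ (-24*x - 6*y + 24)) ∧ ((21:ℤ) ∣ (5*x + 72) ∧ 0 ≤ (5*x + 72)) := by
  rintro ⟨x, y, h⟩
  omega
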